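/- There exists a nut graph Q₀ of order 8 whose automorphism group has order 2, together with two vertices q₁, q₂ of Q₀ that lie in different orbits of the automorphism group and whose stabilisers in the automorphism group are both trivial. -/

import Mathlib

open scoped Classical

/-- A *nut graph*: a finite simple graph on at least 2 vertices whose real adjacency
matrix has nullity (kernel dimension) exactly 1 and such that every nonzero vector in
the kernel of the adjacency matrix has all entries nonzero. -/
def SimpleGraph.IsNut {V : Type*} [Fintype V] (G : SimpleGraph V) : Prop :=
  2 ≤ Fintype.card V ∧
  Module.finrank ℝ (LinearMap.ker (Matrix.mulVecLin (G.adjMatrix ℝ))) = 1 ∧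
  ∀ x : V → ℝ, Matrix.mulVecLin (G.adjMatrix ℝ) x = 0 → x ≠ 0 → ∀ v : V, x v ≠ 0

/-- The automorphism group of a simple graph, realised as the subgroup of the
permutations of the vertex set that preserve adjacency (and non-adjacency). -/
def SimpleGraph.autGroup {V : Type*} (G : SimpleGraph V) : Subgroup (Equiv.Perm V) where
  carrier := { σ | ∀ u v : V, G.Adj (σ u) (σ v) ↔ G.Adj u v }
  mul_mem' := by
    intro σ τ hσ hτ u v
    simpa [hσ (τ u) (τ v)] using hτ u v
  one_mem' := by intro u v; rfl
  inv_mem' := by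
    intro σ hσ u v
    have := hσ (σ⁻¹ u) (σ⁻¹ v)
    simpa using this.symm



def nbMask : Fin 8 → ℕ := ![190, 105, 169, 231, 129, 15, 10, 29]

lemma nb_symm : ∀ u v : Fin 8, Nat.testBit (nbMask u) (v : ℕ) = true → Nat.testBit (nbMask v) (u : ℕ) = true := by decide

lemma nb_irr : ∀ u : Fin 8, ¬ Nat.testBit (nbMask u) (u : ℕ) = true := by decide

def Gadget : SimpleGraph (Fin 8) where
  Adj u v := Nat.testBit (nbMask u) (v : ℕ) = true
  symm := ⟨fun u v h => nb_symm u v h⟩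
  loopless := ⟨fun u h => nb_irr u h⟩


lemma adj_iff (u v : Fin 8) : Gadget.Adj u v ↔ Nat.testBit (nbMask u) (v : ℕ) = true := Iff.rfl

lemma adj_of (u v : Fin 8) (h : Nat.testBit (nbMask u) (v : ℕ) = true) : Gadget.Adj u v := h

lemma not_adj (u v : Fin 8) (h : Nat.testBit (nbMask u) (v : ℕ) = false) : ¬ Gadget.Adj u v := by
  rw [adj_iff, h]; simp

def sigmaFun : Fin 8 → Fin 8 := ![3, 7, 5, 0, 6, 2, 4, 1]

lemma sigma_invol : ∀ x : Fin 8, sigmaFun (sigmaFun x) = x := by decide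

def sigmaPerm : Equiv.Perm (Fin 8) := ⟨sigmaFun, sigmaFun, sigma_invol, sigma_invol⟩

def degF (v : Fin 8) : ℕ := (Finset.univ.filter (fun w : Fin 8 => Nat.testBit (nbMask v) (w : ℕ) = true)).card

lemma aut_eq (τ : Equiv.Perm (Fin 8)) (hτ : ∀ u v, Gadget.Adj (τ u) (τ v) ↔ Gadget.Adj u v) :
    τ = 1 ∨ τ = sigmaPerm := by
  have himg : ∀ v : Fin 8, (Finset.univ.filter (fun w : Fin 8 => Nat.testBit (nbMask (τ v)) (w : ℕ) = true))
      = (Finset.univ.filter (fun w : Fin 8 => Nat.testBit (nbMask v) (w : ℕ) = true)).image τ := by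
    intro v; ext w
    simp only [Finset.mem_image, Finset.mem_filter, Finset.mem_univ, true_and]
    constructor
    · intro h
      refine ⟨τ⁻¹ w, ?_, Equiv.apply_symm_apply τ w⟩
      have h2 := (hτ v (τ⁻¹ w)).mp
      rw [show τ (τ⁻¹ w) = w from Equiv.apply_symm_apply τ w] at h2
      exact h2 h
    · rintro ⟨u, hu, rfl⟩
      exact (hτ v u).mpr hu
  have hdeg : ∀ v, degF (τ v) = degF v := by
    intro v
    rw [degF, degF, himg, Finset.card_image_of_injective _ τ.injective]
  have hd6 : ∀ w : Fin 8, degF w = 6 → w = 0 ∨ w = 3 := by decide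
  have hd2 : ∀ w : Fin 8, degF w = 2 → w = 4 ∨ w = 6 := by decide
  have hd4 : ∀ w : Fin 8, degF w = 4 → w = 1 ∨ w = 2 ∨ w = 5 ∨ w = 7 := by decide
  have e0 := hd6 (τ 0) ((hdeg 0).trans (by decide))
  have e3 := hd6 (τ 3) ((hdeg 3).trans (by decide))
  have e4 := hd2 (τ 4) ((hdeg 4).trans (by decide))
  have e6 := hd2 (τ 6) ((hdeg 6).trans (by decide))
  have e1 := hd4 (τ 1) ((hdeg 1).trans (by decide))
  have e2 := hd4 (τ 2) ((hdeg 2).trans (by decide))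
  have e5 := hd4 (τ 5) ((hdeg 5).trans (by decide))
  have e7 := hd4 (τ 7) ((hdeg 7).trans (by decide))
  rcases e0 with h0 | h0
  · -- identity branch
    rcases e3 with h3 | h3
    · exact absurd (τ.injective (h3.trans h0.symm)) (by decide)
    have h4 : τ 4 = 4 := by
      rcases e4 with h4 | h4
      · exact h4
      · have hc := (hτ 4 0).mpr (adj_of 4 0 (by decide))
        rw [h4, h0] at hc
        exact absurd hc (not_adj _ _ (by decide))
    have h6 : τ 6 = 6 := by
      rcases e6 with h6 | h6
      · exact absurd (τ.injective (h6.trans h4.symm)) (by decide)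
      · exact h6
    have h7 : τ 7 = 7 := by
      have hc := (hτ 7 4).mpr (adj_of 7 4 (by decide))
      rw [h4] at hc
      rcases e7 with h7 | h7 | h7 | h7 <;> rw [h7] at hc <;>
        first
          | exact h7
          | exact absurd hc (not_adj _ _ (by decide))
    have h1 : τ 1 = 1 := by
      have hc := (hτ 1 6).mpr (adj_of 1 6 (by decide))
      rw [h6] at hc
      rcases e1 with h1 | h1 | h1 | h1 <;> rw [h1] at hc <;>
        first
          | exact h1
          | exact absurd hc (not_adj _ _ (by decide))
    have h2 : τ 2 = 2 := by
      have hc := (hτ 2 7).mpr (adj_of 2 7 (by decide))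
      rw [h7] at hc
      rcases e2 with h2 | h2 | h2 | h2 <;> rw [h2] at hc <;>
        first
          | exact h2
          | exact absurd hc (not_adj _ _ (by decide))
    have h5 : τ 5 = 5 := by
      rcases e5 with h5 | h5 | h5 | h5
      · exact absurd (τ.injective (h5.trans h1.symm)) (by decide)
      · exact absurd (τ.injective (h5.trans h2.symm)) (by decide)
      · exact h5
      · exact absurd (τ.injective (h5.trans h7.symm)) (by decide)
    left
    apply Equiv.ext
    intro v
    fin_cases v <;> simp only [Equiv.Perm.coe_one, id_eq] <;> assumption
  · -- sigma branch
    have h3 : τ 3 = 0 := by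
      rcases e3 with h3 | h3
      · exact h3
      · exact absurd (τ.injective (h3.trans h0.symm)) (by decide)
    have h4 : τ 4 = 6 := by
      rcases e4 with h4 | h4
      · have hc := (hτ 4 0).mpr (adj_of 4 0 (by decide))
        rw [h4, h0] at hc
        exact absurd hc (not_adj _ _ (by decide))
      · exact h4
    have h6 : τ 6 = 4 := by
      rcases e6 with h6 | h6
      · exact h6
      · exact absurd (τ.injective (h6.trans h4.symm)) (by decide)
    have h7 : τ 7 = 1 := by
      have hc := (hτ 7 4).mpr (adj_of 7 4 (by decide))
      rw [h4] at hc
      rcases e7 with h7 | h7 | h7 | h7 <;> rw [h7] at hc <;>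
        first
          | exact h7
          | exact absurd hc (not_adj _ _ (by decide))
    have h1 : τ 1 = 7 := by
      have hc := (hτ 1 6).mpr (adj_of 1 6 (by decide))
      rw [h6] at hc
      rcases e1 with h1 | h1 | h1 | h1 <;> rw [h1] at hc <;>
        first
          | exact h1
          | exact absurd hc (not_adj _ _ (by decide))
    have h2 : τ 2 = 5 := by
      have hc := (hτ 2 7).mpr (adj_of 2 7 (by decide))
      rw [h7] at hc
      rcases e2 with h2 | h2 | h2 | h2 <;> rw [h2] at hc <;>
        first
          | exact h2
          | exact absurd hc (not_adj _ _ (by decide))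
    have h5 : τ 5 = 2 := by
      rcases e5 with h5 | h5 | h5 | h5
      · exact absurd (τ.injective (h5.trans h7.symm)) (by decide)
      · exact h5
      · exact absurd (τ.injective (h5.trans h2.symm)) (by decide)
      · exact absurd (τ.injective (h5.trans h1.symm)) (by decide)
    right
    apply Equiv.ext
    intro v
    fin_cases v <;> simp only [sigmaPerm, Equiv.coe_fn_mk] <;> assumption

def kvec : Fin 8 → ℝ := fun v => if (v : ℕ) % 4 < 2 then -1 else 1

lemma kvec_0 : kvec (0 : Fin 8) = -1 := by
  unfold kvec
  rw [if_pos (by decide)]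
lemma kvec_1 : kvec (1 : Fin 8) = -1 := by
  unfold kvec
  rw [if_pos (by decide)]
lemma kvec_2 : kvec (2 : Fin 8) = 1 := by
  unfold kvec
  rw [if_neg (by decide)]
lemma kvec_3 : kvec (3 : Fin 8) = 1 := by
  unfold kvec
  rw [if_neg (by decide)]
lemma kvec_4 : kvec (4 : Fin 8) = -1 := by
  unfold kvec
  rw [if_pos (by decide)]
lemma kvec_5 : kvec (5 : Fin 8) = -1 := by
  unfold kvec
  rw [if_pos (by decide)]
lemma kvec_6 : kvec (6 : Fin 8) = 1 := by
  unfold kvec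
  rw [if_neg (by decide)]
lemma kvec_7 : kvec (7 : Fin 8) = 1 := by
  unfold kvec
  rw [if_neg (by decide)]

lemma kvec_ne (v : Fin 8) : kvec v ≠ 0 := by unfold kvec; split <;> norm_num

lemma nbhd_eq (v : Fin 8) (s : Finset (Fin 8))
    (h : ∀ w : Fin 8, Nat.testBit (nbMask v) (w : ℕ) = true ↔ w ∈ s) :
    Gadget.neighborFinset v = s := by
  ext w
  rw [SimpleGraph.mem_neighborFinset]
  exact h w

lemma ker_main : ∀ x : Fin 8 → ℝ, Matrix.mulVecLin (Gadget.adjMatrix ℝ) x = 0 →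
    x = (-(x 0)) • kvec := by
  intro x hx
  have hv : ∀ v, ∑ u ∈ Gadget.neighborFinset v, x u = 0 := by
    intro v
    have h := congrFun hx v
    rwa [Matrix.mulVecLin_apply, SimpleGraph.adjMatrix_mulVec_apply, Pi.zero_apply] at h
  have e0 := hv 0
  rw [nbhd_eq 0 {1,2,3,4,5,7} (by decide), Finset.sum_insert (by decide), Finset.sum_insert (by decide), Finset.sum_insert (by decide), Finset.sum_insert (by decide), Finset.sum_insert (by decide), Finset.sum_singleton] at e0
  have e1 := hv 1
  rw [nbhd_eq 1 {0,3,5,6} (by decide), Finset.sum_insert (by decide), Finset.sum_insert (by decide), Finset.sum_insert (by decide), Finset.sum_singleton] at e1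
  have e2 := hv 2
  rw [nbhd_eq 2 {0,3,5,7} (by decide), Finset.sum_insert (by decide), Finset.sum_insert (by decide), Finset.sum_insert (by decide), Finset.sum_singleton] at e2
  have e3 := hv 3
  rw [nbhd_eq 3 {0,1,2,5,6,7} (by decide), Finset.sum_insert (by decide), Finset.sum_insert (by decide), Finset.sum_insert (by decide), Finset.sum_insert (by decide), Finset.sum_insert (by decide), Finset.sum_singleton] at e3
  have e4 := hv 4
  rw [nbhd_eq 4 {0,7} (by decide), Finset.sum_insert (by decide), Finset.sum_singleton] at e4
  have e5 := hv 5
  rw [nbhd_eq 5 {0,1,2,3} (by decide), Finset.sum_insert (by decide), Finset.sum_insert (by decide), Finset.sum_insert (by decide), Finset.sum_singleton] at e5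
  have e6 := hv 6
  rw [nbhd_eq 6 {1,3} (by decide), Finset.sum_insert (by decide), Finset.sum_singleton] at e6
  have e7 := hv 7
  rw [nbhd_eq 7 {0,2,3,4} (by decide), Finset.sum_insert (by decide), Finset.sum_insert (by decide), Finset.sum_insert (by decide), Finset.sum_singleton] at e7
  have c1 : x 1 = x 0 := by linarith
  have c2 : x 2 = -x 0 := by linarith
  have c3 : x 3 = -x 0 := by linarith
  have c4 : x 4 = x 0 := by linarith
  have c5 : x 5 = x 0 := by linarith
  have c6 : x 6 = -x 0 := by linarith
  have c7 : x 7 = -x 0 := by linarith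
  funext v
  fin_cases v
  · show x 0 = -(x 0) * kvec 0
    rw [kvec_0]
    linarith
  · show x 1 = -(x 0) * kvec 1
    rw [kvec_1]
    linarith
  · show x 2 = -(x 0) * kvec 2
    rw [kvec_2]
    linarith
  · show x 3 = -(x 0) * kvec 3
    rw [kvec_3]
    linarith
  · show x 4 = -(x 0) * kvec 4
    rw [kvec_4]
    linarith
  · show x 5 = -(x 0) * kvec 5
    rw [kvec_5]
    linarith
  · show x 6 = -(x 0) * kvec 6
    rw [kvec_6]
    linarith
  · show x 7 = -(x 0) * kvec 7
    rw [kvec_7]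
    linarith

lemma kvec_ker : Matrix.mulVecLin (Gadget.adjMatrix ℝ) kvec = 0 := by
  funext v
  rw [Matrix.mulVecLin_apply, SimpleGraph.adjMatrix_mulVec_apply, Pi.zero_apply]
  fin_cases v
  · show ∑ u ∈ Gadget.neighborFinset 0, kvec u = 0
    rw [nbhd_eq 0 {1,2,3,4,5,7} (by decide), Finset.sum_insert (by decide), Finset.sum_insert (by decide), Finset.sum_insert (by decide), Finset.sum_insert (by decide), Finset.sum_insert (by decide), Finset.sum_singleton]
    norm_num [kvec_0, kvec_1, kvec_2, kvec_3, kvec_4, kvec_5, kvec_6, kvec_7]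
  · show ∑ u ∈ Gadget.neighborFinset 1, kvec u = 0
    rw [nbhd_eq 1 {0,3,5,6} (by decide), Finset.sum_insert (by decide), Finset.sum_insert (by decide), Finset.sum_insert (by decide), Finset.sum_singleton]
    norm_num [kvec_0, kvec_1, kvec_2, kvec_3, kvec_4, kvec_5, kvec_6, kvec_7]
  · show ∑ u ∈ Gadget.neighborFinset 2, kvec u = 0
    rw [nbhd_eq 2 {0,3,5,7} (by decide), Finset.sum_insert (by decide), Finset.sum_insert (by decide), Finset.sum_insert (by decide), Finset.sum_singleton]
    norm_num [kvec_0, kvec_1, kvec_2, kvec_3, kvec_4, kvec_5, kvec_6, kvec_7]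
  · show ∑ u ∈ Gadget.neighborFinset 3, kvec u = 0
    rw [nbhd_eq 3 {0,1,2,5,6,7} (by decide), Finset.sum_insert (by decide), Finset.sum_insert (by decide), Finset.sum_insert (by decide), Finset.sum_insert (by decide), Finset.sum_insert (by decide), Finset.sum_singleton]
    norm_num [kvec_0, kvec_1, kvec_2, kvec_3, kvec_4, kvec_5, kvec_6, kvec_7]
  · show ∑ u ∈ Gadget.neighborFinset 4, kvec u = 0
    rw [nbhd_eq 4 {0,7} (by decide), Finset.sum_insert (by decide), Finset.sum_singleton]
    norm_num [kvec_0, kvec_1, kvec_2, kvec_3, kvec_4, kvec_5, kvec_6, kvec_7]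
  · show ∑ u ∈ Gadget.neighborFinset 5, kvec u = 0
    rw [nbhd_eq 5 {0,1,2,3} (by decide), Finset.sum_insert (by decide), Finset.sum_insert (by decide), Finset.sum_insert (by decide), Finset.sum_singleton]
    norm_num [kvec_0, kvec_1, kvec_2, kvec_3, kvec_4, kvec_5, kvec_6, kvec_7]
  · show ∑ u ∈ Gadget.neighborFinset 6, kvec u = 0
    rw [nbhd_eq 6 {1,3} (by decide), Finset.sum_insert (by decide), Finset.sum_singleton]
    norm_num [kvec_0, kvec_1, kvec_2, kvec_3, kvec_4, kvec_5, kvec_6, kvec_7]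
  · show ∑ u ∈ Gadget.neighborFinset 7, kvec u = 0
    rw [nbhd_eq 7 {0,2,3,4} (by decide), Finset.sum_insert (by decide), Finset.sum_insert (by decide), Finset.sum_insert (by decide), Finset.sum_singleton]
    norm_num [kvec_0, kvec_1, kvec_2, kvec_3, kvec_4, kvec_5, kvec_6, kvec_7]

lemma ker_span : LinearMap.ker (Matrix.mulVecLin (Gadget.adjMatrix ℝ)) = Submodule.span ℝ {kvec} := by
  apply le_antisymm
  · intro x hx
    rw [LinearMap.mem_ker] at hx
    rw [Submodule.mem_span_singleton]
    exact ⟨-(x 0), (ker_main x hx).symm⟩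
  · rw [Submodule.span_le, Set.singleton_subset_iff]
    exact LinearMap.mem_ker.mpr kvec_ker

lemma ker_rank : Module.finrank ℝ (LinearMap.ker (Matrix.mulVecLin (Gadget.adjMatrix ℝ))) = 1 := by
  rw [ker_span]
  exact finrank_span_singleton (fun h => by have := congrFun h 0; rw [kvec_0] at this; norm_num at this)

lemma ker_nonzero : ∀ x : Fin 8 → ℝ, Matrix.mulVecLin (Gadget.adjMatrix ℝ) x = 0 → x ≠ 0 →
    ∀ v : Fin 8, x v ≠ 0 := by
  intro x hx hne v
  have hm := ker_main x hx
  have h0 : x 0 ≠ 0 := by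
    intro h0
    apply hne
    rw [hm, h0]
    simp
  have hxv : x v = -(x 0) * kvec v := by
    nth_rewrite 1 [hm]
    rfl
  rw [hxv]
  exact mul_ne_zero (neg_ne_zero.mpr h0) (kvec_ne v)

lemma sigma_testbit : ∀ u v : Fin 8,
    Nat.testBit (nbMask (sigmaFun u)) ((sigmaFun v) : ℕ) = Nat.testBit (nbMask u) (v : ℕ) := by decide

lemma sigma_mem : sigmaPerm ∈ Gadget.autGroup := by
  show ∀ u v : Fin 8, Gadget.Adj (sigmaPerm u) (sigmaPerm v) ↔ Gadget.Adj u v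
  intro u v
  show Nat.testBit (nbMask (sigmaFun u)) ((sigmaFun v) : ℕ) = true ↔
    Nat.testBit (nbMask u) (v : ℕ) = true
  rw [sigma_testbit u v]

/-- There exists a nut graph `Q₀` of order 8 whose automorphism group has order 2,
with two vertices `q₁`, `q₂` lying in different orbits of the automorphism group and
both having trivial stabiliser. -/
theorem exists_gadget_nut_graph :
    ∃ G : SimpleGraph (Fin 8), G.IsNut ∧ Nat.card G.autGroup = 2 ∧
      ∃ q₁ q₂ : Fin 8,
        q₂ ∉ MulAction.orbit G.autGroup q₁ ∧
        MulAction.stabilizer G.autGroup q₁ = ⊥ ∧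
        MulAction.stabilizer G.autGroup q₂ = ⊥ := by
  have hgrp : Gadget.autGroup = Subgroup.zpowers sigmaPerm := by
    ext τ
    constructor
    · intro h
      rcases aut_eq τ h with rfl | rfl
      · exact Subgroup.one_mem _
      · exact Subgroup.mem_zpowers _
    · intro h
      exact Subgroup.zpowers_le.mpr sigma_mem h
  have hsq : sigmaPerm ^ 2 = 1 := by
    apply Equiv.ext
    intro x
    simp only [sq, Equiv.Perm.mul_apply, Equiv.Perm.coe_one, id_eq]
    exact sigma_invol x
  have hne1 : sigmaPerm ≠ 1 := by
    intro h
    have h0 := Equiv.ext_iff.mp h 0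
    simp only [Equiv.Perm.coe_one, id_eq] at h0
    exact absurd h0 (by decide)
  have hord : orderOf sigmaPerm = 2 := orderOf_eq_prime hsq hne1
  refine ⟨Gadget, ⟨by simp, ker_rank, ker_nonzero⟩, ?_, 7, 6, ?_, ?_, ?_⟩
  · rw [hgrp, Nat.card_zpowers, hord]
  · intro horb
    rw [MulAction.mem_orbit_iff] at horb
    obtain ⟨g, hgq⟩ := horb
    have hgq' : (g : Equiv.Perm (Fin 8)) 7 = 6 := hgq
    rcases aut_eq g g.2 with h | h <;> rw [h] at hgq' <;> exact absurd hgq' (by decide)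
  · rw [Subgroup.eq_bot_iff_forall]
    intro x hx
    have hx7 : (x : Equiv.Perm (Fin 8)) 7 = 7 := hx
    rcases aut_eq x x.2 with h | h
    · exact Subtype.ext h
    · rw [h] at hx7
      exact absurd hx7 (by decide)
  · rw [Subgroup.eq_bot_iff_forall]
    intro x hx
    have hx6 : (x : Equiv.Perm (Fin 8)) 6 = 6 := hx
    rcases aut_eq x x.2 with h | h
    · exact Subtype.ext h
    · rw [h] at hx6
      exact absurd hx6 (by decide)
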